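/- Let d be a prime and fix (a, b) ∈ (ZMod d)². Let Ω₀ := d^{−1/2} Σ_{i ∈ ZMod d} e_i ⊗ e_i ∈ ℂ^{ZMod d} ⊗ ℂ^{ZMod d} and Ω_{a,b} := (W_{a,b} ⊗ 1) Ω₀. Then the family of vectors { (W_{k,l} ⊗ 1) Ω_{a,b} : (k,l) ∈ (ZMod d)² } is an orthonormal basis of ℂ^{ZMod d} ⊗ ℂ^{ZMod d}. -/

import Mathlib

open Matrix Complex Kronecker

noncomputable section

/-- ω = exp(2πi/d). -/
def omga (d : ℕ) : ℂ := Complex.exp (2 * Real.pi * Complex.I / d)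

/-- The Weyl operator W_{k,l}: (j,j') entry is ω^{jk} if j' = j + l, else 0. -/
def weyl (d : ℕ) (k l : ZMod d) : Matrix (ZMod d) (ZMod d) ℂ :=
  Matrix.of fun j j' => if j' = j + l then omga d ^ (j * k).val else 0

/-- The maximally entangled unit vector Ω₀ = d^{−1/2} Σ_i e_i ⊗ e_i ∈ ℂ^{ZMod d} ⊗ ℂ^{ZMod d}. -/
def bell0 (d : ℕ) : (ZMod d × ZMod d) → ℂ :=
  fun q => if q.1 = q.2 then (((Real.sqrt d)⁻¹ : ℝ) : ℂ) else 0

/-- The shifted Bell vectors (W_{k,l} ⊗ 1)(W_{a,b} ⊗ 1)Ω₀. -/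
noncomputable def bellShift (d : ℕ) [NeZero d] (a b : ZMod d) (kl : ZMod d × ZMod d) :
    (ZMod d × ZMod d) → ℂ :=
  (weyl d kl.1 kl.2 ⊗ₖ (1 : Matrix (ZMod d) (ZMod d) ℂ)).mulVec
    ((weyl d a b ⊗ₖ (1 : Matrix (ZMod d) (ZMod d) ℂ)).mulVec (bell0 d))

-- helper: char
def ee (d : ℕ) (m : ZMod d) : ℂ := omga d ^ m.val

lemma omga_pow_d (d : ℕ) [NeZero d] : omga d ^ d = 1 := by
  have := Complex.isPrimitiveRoot_exp d (NeZero.ne d)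
  exact this.pow_eq_one

lemma omga_pow_mod (d : ℕ) [NeZero d] (n : ℕ) : omga d ^ (n % d) = omga d ^ n := by
  conv_rhs => rw [← Nat.mod_add_div n d]
  rw [pow_add, pow_mul, omga_pow_d, one_pow, mul_one]

lemma ee_add (d : ℕ) [NeZero d] (x y : ZMod d) : ee d (x + y) = ee d x * ee d y := by
  simp only [ee]
  rw [ZMod.val_add, omga_pow_mod, pow_add]

lemma ee_zero (d : ℕ) [NeZero d] : ee d 0 = 1 := by simp [ee, ZMod.val_zero]

lemma star_ee (d : ℕ) [NeZero d] (m : ZMod d) : star (ee d m) = ee d (-m) := by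
  have h : ee d m * ee d (-m) = 1 := by rw [← ee_add]; simp [ee_zero]
  have hexp : ee d m = Complex.exp (m.val * (2 * Real.pi * Complex.I / d)) := by
    rw [ee, omga, ← Complex.exp_nat_mul]
  have hnorm : ‖ee d m‖ = 1 := by
    rw [hexp, Complex.norm_exp]
    have : (↑m.val * (2 * ↑Real.pi * Complex.I / ↑d)).re = 0 := by
      simp [Complex.div_re, Complex.mul_im, Complex.mul_re]
      exact Or.inl (by rw [← ZMod.natCast_val]; exact Complex.natCast_im _)
    rw [this, Real.exp_zero]
  rw [RCLike.star_def, ← Complex.inv_eq_conj hnorm]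
  exact inv_eq_of_mul_eq_one_right h

lemma sum_ee (d : ℕ) (hd : d.Prime) (m : ZMod d) :
    haveI : NeZero d := ⟨hd.ne_zero⟩
    ∑ j : ZMod d, ee d (j * m) = if m = 0 then (d : ℂ) else 0 := by
  haveI : NeZero d := ⟨hd.ne_zero⟩
  haveI : Fact d.Prime := ⟨hd⟩
  by_cases hm : m = 0
  · simp [hm, ee_zero]
  · simp only [hm, if_false]
    have hbij : Function.Bijective (fun j : ZMod d => j * m) :=
      (Equiv.mulRight₀ m hm).bijective
    rw [Fintype.sum_bijective _ hbij (fun j => ee d (j * m)) (ee d) (fun _ => rfl)]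
    have : ∑ j : ZMod d, ee d j = ∑ i ∈ Finset.range d, omga d ^ i :=
      Finset.sum_nbij' (fun j => j.val) (fun i => (i : ZMod d))
        (fun j _ => Finset.mem_range.mpr (ZMod.val_lt j))
        (fun i _ => Finset.mem_univ _)
        (fun j _ => ZMod.natCast_zmod_val j)
        (fun i hi => ZMod.val_cast_of_lt (Finset.mem_range.mp hi))
        (fun j _ => rfl)
    rw [this, geom_sum_eq, omga_pow_d, sub_self, zero_div]
    exact (Complex.isPrimitiveRoot_exp d hd.ne_zero).ne_one hd.one_lt

lemma kron_mulVec (d : ℕ) [NeZero d] (M : Matrix (ZMod d) (ZMod d) ℂ)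
    (v : ZMod d × ZMod d → ℂ) (j j' : ZMod d) :
    ((M ⊗ₖ (1 : Matrix (ZMod d) (ZMod d) ℂ)).mulVec v) (j, j') = ∑ m, M j m * v (m, j') := by
  simp [Matrix.mulVec, dotProduct, Fintype.sum_prod_type, Matrix.kroneckerMap_apply,
    Matrix.one_apply, mul_ite, mul_zero, ite_mul, zero_mul, mul_one]

lemma bellShift_apply (d : ℕ) [NeZero d] (a b : ZMod d) (kl p : ZMod d × ZMod d) :
    bellShift d a b kl p =
      if p.2 = p.1 + kl.2 + b then
        (((Real.sqrt d)⁻¹ : ℝ) : ℂ) * ee d (p.1 * kl.1) * ee d ((p.1 + kl.2) * a) else 0 := by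
  obtain ⟨k, l⟩ := kl; obtain ⟨j, j'⟩ := p
  rw [bellShift, kron_mulVec]
  simp only [kron_mulVec]
  simp only [weyl, bell0, Matrix.of_apply, ite_mul, zero_mul, mul_ite, mul_zero]
  simp [Finset.sum_ite_eq, Finset.sum_ite_eq', ee, add_assoc, mul_comm, mul_left_comm, mul_assoc]

lemma bell_ortho (d : ℕ) [NeZero d] (hd : d.Prime) (a b : ZMod d) (pq qr : ZMod d × ZMod d) :
    star (bellShift d a b pq) ⬝ᵥ bellShift d a b qr = if pq = qr then 1 else 0 := by
  obtain ⟨k₁, l₁⟩ := pq; obtain ⟨k₂, l₂⟩ := qr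
  have hdC : (d : ℂ) ≠ 0 := Nat.cast_ne_zero.mpr (NeZero.ne d)
  set c : ℂ := (((Real.sqrt d)⁻¹ : ℝ) : ℂ) with hc
  have hcc : c * c * d = 1 := by
    rw [hc, ← Complex.ofReal_mul, ← mul_inv, Real.mul_self_sqrt (Nat.cast_nonneg d)]
    push_cast
    exact inv_mul_cancel₀ hdC
  have hstar_c : star c = c := by rw [hc, RCLike.star_def, Complex.conj_ofReal]
  simp only [dotProduct, Pi.star_apply, bellShift_apply]
  rw [Fintype.sum_prod_type]
  simp only [apply_ite (star : ℂ → ℂ), star_zero, ite_mul, zero_mul, mul_ite, mul_zero]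
  simp only [Finset.sum_ite_eq', Finset.mem_univ, if_true]
  by_cases hl : l₁ = l₂
  · subst hl
    simp only [if_pos rfl, Prod.mk.injEq, and_true]
    have hterm : ∀ j : ZMod d,
        star (c * ee d (j * k₁) * ee d ((j + l₁) * a)) * (c * ee d (j * k₂) * ee d ((j + l₁) * a))
          = c * c * ee d (j * (k₂ - k₁)) := by
      intro j
      rw [star_mul', star_mul', hstar_c, star_ee, star_ee]
      have h1 : ee d (-(j * k₁)) * ee d (j * k₂) = ee d (j * (k₂ - k₁)) := by
        rw [← ee_add]; ring_nf
      have h2 : ee d (-((j + l₁) * a)) * ee d ((j + l₁) * a) = 1 := by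
        rw [← ee_add, neg_add_cancel, ee_zero]
      have hrw : c * ee d (-(j * k₁)) * ee d (-((j + l₁) * a)) *
            (c * ee d (j * k₂) * ee d ((j + l₁) * a)) =
          c * c * (ee d (-(j * k₁)) * ee d (j * k₂)) *
            (ee d (-((j + l₁) * a)) * ee d ((j + l₁) * a)) := by ring
      rw [hrw, h1, h2, mul_one]
    simp only [← hc, hterm, if_true]
    rw [← Finset.mul_sum, sum_ee d hd (k₂ - k₁)]
    by_cases hk : k₁ = k₂
    · simp [hk, sub_self, hcc]
    · have : k₂ - k₁ ≠ 0 := sub_ne_zero.mpr (Ne.symm hk)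
      simp [this, hk]
  · have hcond : ∀ j : ZMod d, ¬(j + l₂ + b = j + l₁ + b) := by
      intro j h
      exact hl (add_left_cancel (add_right_cancel h)).symm
    simp only [hcond, if_false, Finset.sum_const_zero]
    have hne : (k₁, l₁) ≠ (k₂, l₂) := by simp [Prod.ext_iff, hl]
    simp [hne]

/-- for prime d and any (a,b), the family {(W_{k,l} ⊗ 1)Ω_{a,b}} is an
orthonormal basis of ℂ^{ZMod d} ⊗ ℂ^{ZMod d}. -/
theorem shifted_bell_basis
    (d : ℕ) [NeZero d] (hd : d.Prime) (a b : ZMod d) :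
    (∀ pq qr : ZMod d × ZMod d,
      star (bellShift d a b pq) ⬝ᵥ bellShift d a b qr = if pq = qr then 1 else 0) ∧
    Submodule.span ℂ (Set.range (bellShift d a b)) = ⊤ := by
  refine ⟨bell_ortho d hd a b, ?_⟩
  have horth : Orthonormal ℂ
      (fun kl => (WithLp.equiv 2 ((ZMod d × ZMod d) → ℂ)).symm (bellShift d a b kl)) := by
    rw [orthonormal_iff_ite]
    intro i j
    have := bell_ortho d hd a b i j
    simpa [PiLp.inner_apply, RCLike.inner_apply, dotProduct, Pi.star_apply,
      mul_comm] using this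
  have hli : LinearIndependent ℂ (bellShift d a b) :=
    horth.linearIndependent.map' (WithLp.linearEquiv 2 ℂ _).toLinearMap (WithLp.linearEquiv 2 ℂ _).ker
  exact hli.span_eq_top_of_card_eq_finrank (by
    simp [Module.finrank_pi, ZMod.card])

end
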